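/- Lemma 6.3 (lower bound for the sound speed). Under the bootstrap assumptions of Proposition 4.1 and the modulation bounds |κ̇| ≤ M, |T*| ≤ 3Mε², for every s ≥ −log ε the self-similar sound speed S = (1/2)(e^{−s/2}W + κ − Z) satisfies ‖S(·,s) − κ₀/2‖_{L∞(X(s))} ≤ ε^{1/8}. In particular S is bounded away from 0 on X(s). -/

import Mathlib

/-!
Lemma 6.3 (lower bound for the sound speed).  Under the bootstrap assumptions
(`|W| ≤ 2η^{1/6}` and `|Z| ≤ Mε^{1/2}` on `X(s)`) and the modulation bounds
(`κ(-ε) = κ₀`, `|κ̇| ≤ M`, `|T*| ≤ 3Mε²`), the self-similar sound speed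
`S = (1/2)(e^{-s/2}W + κ - Z)` satisfies `‖S(·,s) - κ₀/2‖_{L∞(X(s))} ≤ ε^{1/8}`
for all `s ≥ -log ε`, provided ε is sufficiently small (depending on α, κ₀, M).
-/

/-- The weight `η(y) = 1 + y₁² + |y̌|⁶`. -/
noncomputable def eta (y : Fin 3 → ℝ) : ℝ := 1 + (y 0)^2 + ((y 1)^2 + (y 2)^2)^3

/-- The support set `X(s) = {|y₁| ≤ 2ε^{1/2}e^{3s/2}, |y̌| ≤ 2ε^{1/6}e^{s/2}}`. -/
noncomputable def Xs (ε s : ℝ) : Set (Fin 3 → ℝ) :=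
  {y | |y 0| ≤ 2 * ε ^ (1/2 : ℝ) * Real.exp (3*s/2) ∧
       Real.sqrt ((y 1)^2 + (y 2)^2) ≤ 2 * ε ^ (1/6 : ℝ) * Real.exp (s/2)}

set_option maxHeartbeats 2000000 in
theorem sound_speed_lower_bound
    (α κ0 : ℝ) (hα : 0 < α) (hκ0 : 1 < κ0) :
    ∀ M : ℝ, 1 ≤ M → ∃ ε0 : ℝ, 0 < ε0 ∧ ∀ ε : ℝ, 0 < ε → ε < ε0 →
    ∀ (W Z S : (Fin 3 → ℝ) → ℝ → ℝ) (κ : ℝ → ℝ) (tOf : ℝ → ℝ) (Tstar : ℝ),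
      -- modulation bounds
      κ (-ε) = κ0 →
      (∀ t ∈ Set.Icc (-ε) Tstar, DifferentiableAt ℝ κ t) →
      (∀ t ∈ Set.Icc (-ε) Tstar, |deriv κ t| ≤ M) →
      |Tstar| ≤ 3 * M * ε^2 →
      (∀ s : ℝ, -Real.log ε ≤ s → tOf s ∈ Set.Icc (-ε) Tstar) →
      -- bootstrap assumptions
      (∀ s : ℝ, -Real.log ε ≤ s → ∀ y ∈ Xs ε s,
        |W y s| ≤ 2 * eta y ^ (1/6 : ℝ)) →
      (∀ s : ℝ, -Real.log ε ≤ s → ∀ y ∈ Xs ε s,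
        |Z y s| ≤ M * ε ^ (1/2 : ℝ)) →
      -- the sound speed in self-similar variables
      (∀ (y : Fin 3 → ℝ) (s : ℝ),
        S y s = (1/2) * (Real.exp (-s/2) * W y s + κ (tOf s) - Z y s)) →
      -- conclusion: S stays ε^{1/8}-close to κ₀/2 on X(s)
      ∀ s : ℝ, -Real.log ε ≤ s → ∀ y ∈ Xs ε s,
        |S y s - κ0 / 2| ≤ ε ^ (1/8 : ℝ) := by
  intro M hM
  have hM0 : (0:ℝ) < M := lt_of_lt_of_le one_pos hM
  refine ⟨((10*M)⁻¹)^24, by positivity, ?_⟩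
  intro ε hε hε0 W Z S κ tOf Tstar hκε hκdiff hκder hT hts hW hZ hS s hs y hy
  set t : ℝ := ε ^ (1/24:ℝ) with htdef
  have htpos : 0 < t := Real.rpow_pos_of_pos hε _
  have hpow : ∀ n : ℕ, ε ^ ((n:ℝ)/24) = t ^ n := by
    intro n
    rw [htdef, ← Real.rpow_natCast (ε ^ (1/24:ℝ)) n, ← Real.rpow_mul hε.le]
    ring_nf
  have h24 : ε = t ^ 24 := by
    have := hpow 24; norm_num at this; rw [← this]
  have h3 : ε ^ (1/8:ℝ) = t ^ 3 := by
    have := hpow 3; norm_num at this; rw [← this]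
  have h4 : ε ^ (1/6:ℝ) = t ^ 4 := by
    have := hpow 4; norm_num at this; rw [← this]
  have h12 : ε ^ (1/2:ℝ) = t ^ 12 := by
    have := hpow 12; norm_num at this; rw [← this]
  have ht10 : t ≤ (10*M)⁻¹ := by
    have h1 : t ^ 24 < ((10*M)⁻¹) ^ 24 := h24 ▸ hε0
    exact le_of_lt ((pow_lt_pow_iff_left₀ htpos.le (by positivity) (by norm_num)).mp h1)
  have hu : M * t ≤ 1/10 := by
    have h1 := mul_le_mul_of_nonneg_left ht10 hM0.le
    calc M * t ≤ M * (10*M)⁻¹ := h1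
      _ = 1/10 := by field_simp
  have ht1 : t ≤ 1/10 := by nlinarith
  have hε1 : ε ≤ 1 := by
    rw [h24]
    calc t^24 ≤ (1/10:ℝ)^24 := pow_le_pow_left₀ htpos.le ht1 24
      _ ≤ 1 := by norm_num
  -- 1 ≤ ε * exp(3s)
  have hinv1 : (1:ℝ) ≤ ε⁻¹ := by
    have := inv_anti₀ hε hε1; simpa using this
  have hexp3 : 1 ≤ ε * Real.exp (3*s) := by
    have h1 : Real.exp (-Real.log ε) ≤ Real.exp s := Real.exp_le_exp.mpr hs
    have h2 : Real.exp (-Real.log ε) = ε⁻¹ := by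
      rw [Real.exp_neg, Real.exp_log hε]
    have h3' : ε⁻¹ ≤ Real.exp s := h2 ▸ h1
    have h4' : ε⁻¹ ^ 3 ≤ Real.exp s ^ 3 :=
      pow_le_pow_left₀ (by positivity) h3' 3
    have h5 : Real.exp (3*s) = Real.exp s ^ 3 := by
      rw [← Real.exp_nat_mul]; norm_num
    have h6 : ε * ε⁻¹ ^ 3 = ε⁻¹ ^ 2 := by field_simp
    have h7 : (1:ℝ) ≤ ε⁻¹ ^ 2 := by nlinarith
    calc (1:ℝ) ≤ ε⁻¹ ^ 2 := h7
      _ = ε * ε⁻¹ ^ 3 := h6.symm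
      _ ≤ ε * Real.exp s ^ 3 := by nlinarith
      _ = ε * Real.exp (3*s) := by rw [h5]
  -- η bound
  obtain ⟨hy1, hy2⟩ := hy
  have hy1sq : (y 0)^2 ≤ 4 * ε * Real.exp (3*s) := by
    have hB : (0:ℝ) ≤ 2 * ε ^ (1/2:ℝ) * Real.exp (3*s/2) := by positivity
    have h1 : |y 0|^2 ≤ (2 * ε ^ (1/2:ℝ) * Real.exp (3*s/2))^2 :=
      pow_le_pow_left₀ (abs_nonneg _) hy1 2
    have h2 : (2 * ε ^ (1/2:ℝ) * Real.exp (3*s/2))^2 = 4 * ε * Real.exp (3*s) := by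
      have he : Real.exp (3*s/2)^2 = Real.exp (3*s) := by
        rw [← Real.exp_nat_mul]; ring_nf
      have hε2 : (ε ^ (1/2:ℝ))^2 = ε := by
        rw [h12, h24]; ring
      calc (2 * ε ^ (1/2:ℝ) * Real.exp (3*s/2))^2
          = 4 * (ε ^ (1/2:ℝ))^2 * Real.exp (3*s/2)^2 := by ring
        _ = 4 * ε * Real.exp (3*s) := by rw [he, hε2]
    calc (y 0)^2 = |y 0|^2 := (sq_abs _).symm
      _ ≤ _ := h1
      _ = _ := h2
  have hy2cube : ((y 1)^2 + (y 2)^2)^3 ≤ 64 * ε * Real.exp (3*s) := by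
    have hr : (0:ℝ) ≤ (y 1)^2 + (y 2)^2 := by positivity
    have h1 : (y 1)^2 + (y 2)^2 ≤ (2 * ε ^ (1/6:ℝ) * Real.exp (s/2))^2 := by
      have := pow_le_pow_left₀ (Real.sqrt_nonneg _) hy2 2
      rwa [Real.sq_sqrt hr] at this
    have h2 : ((y 1)^2 + (y 2)^2)^3 ≤ ((2 * ε ^ (1/6:ℝ) * Real.exp (s/2))^2)^3 :=
      pow_le_pow_left₀ hr h1 3
    have h3' : ((2 * ε ^ (1/6:ℝ) * Real.exp (s/2))^2)^3 = 64 * ε * Real.exp (3*s) := by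
      have he : Real.exp (s/2)^6 = Real.exp (3*s) := by
        rw [← Real.exp_nat_mul]; ring_nf
      have hε6 : (ε ^ (1/6:ℝ))^6 = ε := by rw [h4, h24]; ring
      calc ((2 * ε ^ (1/6:ℝ) * Real.exp (s/2))^2)^3
          = 64 * (ε ^ (1/6:ℝ))^6 * Real.exp (s/2)^6 := by ring
        _ = 64 * ε * Real.exp (3*s) := by rw [he, hε6]
    exact h2.trans_eq h3'
  have hηle : eta y ≤ 729 * ε * Real.exp (3*s) := by
    unfold eta; linarith [hexp3, hy1sq, hy2cube]
  have hη6 : eta y ^ (1/6:ℝ) ≤ 3 * ε ^ (1/6:ℝ) * Real.exp (s/2) := by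
    have hη0 : (0:ℝ) ≤ eta y := by unfold eta; positivity
    have hb : (0:ℝ) ≤ 3 * ε ^ (1/6:ℝ) * Real.exp (s/2) := by positivity
    have hb6 : (3 * ε ^ (1/6:ℝ) * Real.exp (s/2))^6 = 729 * ε * Real.exp (3*s) := by
      have he : Real.exp (s/2)^6 = Real.exp (3*s) := by
        rw [← Real.exp_nat_mul]; ring_nf
      have hε6 : (ε ^ (1/6:ℝ))^6 = ε := by rw [h4, h24]; ring
      calc (3 * ε ^ (1/6:ℝ) * Real.exp (s/2))^6
          = 729 * (ε ^ (1/6:ℝ))^6 * Real.exp (s/2)^6 := by ring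
        _ = _ := by rw [he, hε6]
    calc eta y ^ (1/6:ℝ) ≤ ((3 * ε ^ (1/6:ℝ) * Real.exp (s/2))^6) ^ (1/6:ℝ) :=
          Real.rpow_le_rpow hη0 (hηle.trans_eq hb6.symm) (by norm_num)
      _ = 3 * ε ^ (1/6:ℝ) * Real.exp (s/2) := by
          rw [← Real.rpow_natCast (3 * ε ^ (1/6:ℝ) * Real.exp (s/2)) 6,
            ← Real.rpow_mul hb]
          norm_num
  -- W bound
  have hWb : Real.exp (-s/2) * |W y s| ≤ 6 * ε ^ (1/6:ℝ) := by
    have h1 : |W y s| ≤ 6 * ε ^ (1/6:ℝ) * Real.exp (s/2) := by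
      have := hW s hs y ⟨hy1, hy2⟩
      linarith [hη6]
    have h2 := mul_le_mul_of_nonneg_left h1 (Real.exp_nonneg (-s/2))
    calc Real.exp (-s/2) * |W y s|
        ≤ Real.exp (-s/2) * (6 * ε ^ (1/6:ℝ) * Real.exp (s/2)) := h2
      _ = 6 * ε ^ (1/6:ℝ) * (Real.exp (-s/2) * Real.exp (s/2)) := by ring
      _ = 6 * ε ^ (1/6:ℝ) := by
          rw [← Real.exp_add]
          have hz : -s/2 + s/2 = 0 := by ring
          rw [hz, Real.exp_zero, mul_one]
  -- κ bound
  have hmem := hts s hs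
  have hder' : ∀ x ∈ Set.Icc (-ε) Tstar,
      HasDerivWithinAt κ (deriv κ x) (Set.Icc (-ε) Tstar) x :=
    fun x hx => (hκdiff x hx).hasDerivAt.hasDerivWithinAt
  have hlip := norm_image_sub_le_of_norm_deriv_le_segment' hder'
    (fun x hx => by simpa [Real.norm_eq_abs] using hκder x (Set.Ico_subset_Icc_self hx))
    (tOf s) hmem
  have hκb : |κ (tOf s) - κ0| ≤ 3*M^2*ε^2 + M*ε := by
    rw [← hκε]
    have h1 : tOf s - (-ε) ≤ 3*M*ε^2 + ε := by
      have h2 := hmem.2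
      have h3' := le_abs_self Tstar
      linarith
    calc |κ (tOf s) - κ (-ε)| ≤ M * (tOf s - (-ε)) := by
          simpa [Real.norm_eq_abs] using hlip
      _ ≤ M * (3*M*ε^2 + ε) := mul_le_mul_of_nonneg_left h1 hM0.le
      _ = 3*M^2*ε^2 + M*ε := by ring
  have hZb := hZ s hs y ⟨hy1, hy2⟩
  -- combine
  have hX : S y s - κ0/2
      = 1/2 * (Real.exp (-s/2) * W y s + (κ (tOf s) - κ0) - Z y s) := by
    rw [hS]; ring
  have habs : |S y s - κ0/2| ≤
      1/2 * (Real.exp (-s/2) * |W y s| + |κ (tOf s) - κ0| + |Z y s|) := by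
    rw [hX, abs_mul, abs_of_nonneg (by norm_num : (0:ℝ) ≤ 1/2)]
    have htri : |Real.exp (-s/2) * W y s + (κ (tOf s) - κ0) - Z y s|
        ≤ |Real.exp (-s/2) * W y s| + |κ (tOf s) - κ0| + |Z y s| := by
      have hrw : Real.exp (-s/2) * W y s + (κ (tOf s) - κ0) - Z y s
          = (Real.exp (-s/2) * W y s + (κ (tOf s) - κ0)) + (-(Z y s)) := by ring
      rw [hrw]
      have h1 := abs_add_le (Real.exp (-s/2) * W y s + (κ (tOf s) - κ0)) (-(Z y s))
      have h2 := abs_add_le (Real.exp (-s/2) * W y s) (κ (tOf s) - κ0)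
      rw [abs_neg] at h1
      linarith
    have hexpabs : |Real.exp (-s/2) * W y s| = Real.exp (-s/2) * |W y s| := by
      rw [abs_mul, abs_of_pos (Real.exp_pos _)]
    rw [← hexpabs]; linarith
  -- final arithmetic in t
  rw [h3]
  have p46 : t^46 ≤ t^3 := pow_le_pow_of_le_one htpos.le (by linarith) (by norm_num)
  have p23 : t^23 ≤ t^3 := pow_le_pow_of_le_one htpos.le (by linarith) (by norm_num)
  have p11 : t^11 ≤ t^3 := pow_le_pow_of_le_one htpos.le (by linarith) (by norm_num)
  have e1 : 6 * t^4 ≤ (6/10) * t^3 := by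
    have := mul_le_mul_of_nonneg_right ht1 (pow_nonneg htpos.le 3)
    nlinarith [this]
  have e2 : 3*M^2*(t^24)^2 ≤ (3/100)*t^3 := by
    have hmt : (M*t)*(M*t) ≤ (1/10)*(1/10) :=
      mul_le_mul hu hu (by positivity) (by norm_num)
    linarith [mul_le_mul hmt p46 (pow_nonneg htpos.le 46) (by norm_num : (0:ℝ) ≤ (1/10)*(1/10))]
  have e3 : M*t^24 ≤ (1/10)*t^3 := by
    linarith [mul_le_mul hu p23 (pow_nonneg htpos.le 23) (by norm_num : (0:ℝ) ≤ 1/10)]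
  have e4 : M*t^12 ≤ (1/10)*t^3 := by
    linarith [mul_le_mul hu p11 (pow_nonneg htpos.le 11) (by norm_num : (0:ℝ) ≤ 1/10)]
  have hfinal : 1/2 * (6 * ε ^ (1/6:ℝ) + (3*M^2*ε^2 + M*ε) + M * ε ^ (1/2:ℝ)) ≤ t^3 := by
    rw [h4, h12, h24]; linarith [e1, e2, e3, e4, pow_nonneg htpos.le 3]
  calc |S y s - κ0/2| ≤ _ := habs
    _ ≤ 1/2 * (6 * ε ^ (1/6:ℝ) + (3*M^2*ε^2 + M*ε) + M * ε ^ (1/2:ℝ)) := by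
        linarith [hWb, hκb, hZb]
    _ ≤ t^3 := hfinal
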